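/- Fidelity monotonicity under partial trace: for density matrices ρ, σ on H_A ⊗ H_B, F(ρ, σ) ≤ F(tr_B ρ, tr_B σ), where F(ρ,σ) = tr√(√ρ σ √ρ). -/

import Mathlib

open scoped ComplexOrder

/-- Partial trace over the second tensor factor. -/
noncomputable def ptraceB {a b : ℕ} (M : Matrix (Fin a × Fin b) (Fin a × Fin b) ℂ) :
    Matrix (Fin a) (Fin a) ℂ :=
  fun i k => ∑ j, M (i, j) (k, j)

/-- The positive semidefinite square root (removed from Mathlib; old definition restored). -/
noncomputable def Matrix.PosSemidef.sqrt {n : Type*} [Fintype n] [DecidableEq n] {𝕜 : Type*}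
    [RCLike 𝕜] {A : Matrix n n 𝕜} (hA : A.PosSemidef) : Matrix n n 𝕜 :=
  (hA.1.eigenvectorUnitary : Matrix n n 𝕜) *
    Matrix.diagonal (((↑) : ℝ → 𝕜) ∘ Real.sqrt ∘ hA.1.eigenvalues) *
    (star hA.1.eigenvectorUnitary : Matrix n n 𝕜)

lemma Matrix.PosSemidef.posSemidef_sqrt {n : Type*} [Fintype n] [DecidableEq n] {𝕜 : Type*}
    [RCLike 𝕜] {A : Matrix n n 𝕜} (hA : A.PosSemidef) : hA.sqrt.PosSemidef := by
  unfold Matrix.PosSemidef.sqrt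
  have hU : star (hA.1.eigenvectorUnitary : Matrix n n 𝕜)
      = Matrix.conjTranspose (hA.1.eigenvectorUnitary : Matrix n n 𝕜) := rfl
  rw [hU]
  refine Matrix.PosSemidef.mul_mul_conjTranspose_same ?_ _
  refine Matrix.PosSemidef.diagonal fun i => ?_
  simp only [Pi.zero_apply, Function.comp_apply]
  exact RCLike.ofReal_nonneg.mpr (Real.sqrt_nonneg _)

lemma Matrix.PosSemidef.sqrt_mul_self {n : Type*} [Fintype n] [DecidableEq n] {𝕜 : Type*}
    [RCLike 𝕜] {A : Matrix n n 𝕜} (hA : A.PosSemidef) : hA.sqrt * hA.sqrt = A := by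
  unfold Matrix.PosSemidef.sqrt
  have hU1 : star (hA.1.eigenvectorUnitary : Matrix n n 𝕜) * (hA.1.eigenvectorUnitary : Matrix n n 𝕜) = 1 :=
    Matrix.mem_unitaryGroup_iff'.mp hA.1.eigenvectorUnitary.2
  have hd : Matrix.diagonal (((↑) : ℝ → 𝕜) ∘ Real.sqrt ∘ hA.1.eigenvalues) *
      Matrix.diagonal (((↑) : ℝ → 𝕜) ∘ Real.sqrt ∘ hA.1.eigenvalues)
      = Matrix.diagonal (RCLike.ofReal ∘ hA.1.eigenvalues) := by
    rw [Matrix.diagonal_mul_diagonal]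
    congr 1
    funext i
    simp only [Function.comp_apply, ← RCLike.ofReal_mul, Real.mul_self_sqrt (hA.eigenvalues_nonneg i)]
  conv_rhs => rw [hA.1.spectral_theorem, Unitary.conjStarAlgAut_apply]
  rw [← hd]
  simp only [Matrix.mul_assoc]
  rw [← Matrix.mul_assoc (star (hA.1.eigenvectorUnitary : Matrix n n 𝕜)), hU1, Matrix.one_mul]

open Matrix

section Aux
variable {m n p : Type*} [Fintype m] [Fintype n] [Fintype p]

-- bridge: dotProduct to inner product
noncomputable abbrev Ev {n : Type*} [Fintype n] (v : n → ℂ) : EuclideanSpace ℂ n :=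
  (WithLp.equiv 2 _).symm v

lemma dot_eq_inner (v w : n → ℂ) : dotProduct (star v) w = inner ℂ (Ev v) (Ev w) :=
  dotProduct_comm _ _

lemma normsq_eq (v : n → ℂ) : (dotProduct (star v) v).re = ‖Ev v‖ ^ 2 := by
  rw [dot_eq_inner]
  exact inner_self_eq_norm_sq (𝕜 := ℂ) (Ev v)

-- the key dotProduct identity
lemma dot_conjT (W : Matrix m n ℂ) (x : m → ℂ) (y : n → ℂ) :
    dotProduct (star x) (W *ᵥ y) = dotProduct (star (Wᴴ *ᵥ x)) y := by
  rw [star_mulVec, conjTranspose_conjTranspose, dotProduct_mulVec]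

end Aux
section Contr
variable {m n p : Type*} [Fintype m] [Fintype n] [Fintype p]

lemma contr_dot_le [DecidableEq n] {W : Matrix m n ℂ} (hW : (1 - Wᴴ * W).PosSemidef)
    (v : n → ℂ) :
    (dotProduct (star (W *ᵥ v)) (W *ᵥ v)).re ≤ (dotProduct (star v) v).re := by
  have h := hW.dotProduct_mulVec_nonneg v
  have hexp : dotProduct (star v) ((1 - Wᴴ * W) *ᵥ v)
      = dotProduct (star v) v - dotProduct (star (W *ᵥ v)) (W *ᵥ v) := by
    rw [sub_mulVec, one_mulVec, dotProduct_sub, ← mulVec_mulVec, dot_conjT Wᴴ,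
      conjTranspose_conjTranspose]
  rw [hexp] at h
  have := (Complex.le_def.mp h).1
  simp only [Complex.zero_re, Complex.sub_re] at this
  linarith

lemma contr_norm_le [DecidableEq n] {W : Matrix m n ℂ} (hW : (1 - Wᴴ * W).PosSemidef)
    (v : n → ℂ) : ‖Ev (W *ᵥ v)‖ ≤ ‖Ev v‖ := by
  have h := contr_dot_le hW v
  rw [normsq_eq, normsq_eq] at h
  exact le_of_pow_le_pow_left₀ two_ne_zero (norm_nonneg _) h

lemma contr_conjTranspose [DecidableEq m] [DecidableEq n] {W : Matrix m n ℂ}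
    (hW : (1 - Wᴴ * W).PosSemidef) : (1 - W * Wᴴ).PosSemidef := by
  refine Matrix.PosSemidef.of_dotProduct_mulVec_nonneg ?_ ?_
  · unfold Matrix.IsHermitian
    simp [conjTranspose_sub, conjTranspose_mul]
  · intro x
    have key : ‖Ev (Wᴴ *ᵥ x)‖ ≤ ‖Ev x‖ := by
      set y := Wᴴ *ᵥ x with hy
      rcases eq_or_ne (‖Ev y‖) 0 with h0 | h0
      · rw [h0]; exact norm_nonneg _
      · have h1 : ((inner ℂ (Ev x) (Ev (W *ᵥ y)) : ℂ)).re = ‖Ev y‖ ^ 2 := by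
          rw [← dot_eq_inner, dot_conjT W x y, ← hy, normsq_eq]
        have h2 : ((inner ℂ (Ev x) (Ev (W *ᵥ y)) : ℂ)).re ≤ ‖Ev x‖ * ‖Ev (W *ᵥ y)‖ := by
          have := (RCLike.re_le_norm (K := ℂ) (inner ℂ (Ev x) (Ev (W *ᵥ y)))).trans
            (norm_inner_le_norm (𝕜 := ℂ) (Ev x) (Ev (W *ᵥ y)))
          simpa [RCLike.re] using this
        have h3 : ‖Ev (W *ᵥ y)‖ ≤ ‖Ev y‖ := contr_norm_le hW y
        have h4 : ‖Ev y‖ ^ 2 ≤ ‖Ev x‖ * ‖Ev y‖ := by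
          rw [← h1]
          exact h2.trans (mul_le_mul_of_nonneg_left h3 (norm_nonneg _))
        have hpos : 0 < ‖Ev y‖ := lt_of_le_of_ne (norm_nonneg _) (Ne.symm h0)
        nlinarith
    have hexp : dotProduct (star x) ((1 - W * Wᴴ) *ᵥ x)
        = dotProduct (star x) x - dotProduct (star (Wᴴ *ᵥ x)) (Wᴴ *ᵥ x) := by
      rw [sub_mulVec, one_mulVec, dotProduct_sub, ← mulVec_mulVec, dot_conjT W]
    rw [hexp]
    have ha := dotProduct_star_self_nonneg x
    have hb := dotProduct_star_self_nonneg (Wᴴ *ᵥ x)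
    rw [Complex.le_def] at ha hb ⊢
    refine ⟨?_, ?_⟩
    · simp only [Complex.zero_re, Complex.sub_re]
      have hre : (dotProduct (star (Wᴴ *ᵥ x)) (Wᴴ *ᵥ x)).re ≤ (dotProduct (star x) x).re := by
        rw [normsq_eq, normsq_eq]
        nlinarith [norm_nonneg (Ev (Wᴴ *ᵥ x)), norm_nonneg (Ev x)]
      linarith
    · simp only [Complex.zero_im, Complex.sub_im]
      have h1 := ha.2; have h2 := hb.2
      simp only [Complex.zero_im] at h1 h2
      linarith

lemma contr_mul [DecidableEq n] [DecidableEq p] {C : Matrix m n ℂ} {V : Matrix n p ℂ}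
    (hC : (1 - Cᴴ * C).PosSemidef) (hV : (1 - Vᴴ * V).PosSemidef) :
    (1 - (C * V)ᴴ * (C * V)).PosSemidef := by
  have heq : 1 - (C * V)ᴴ * (C * V) = (1 - Vᴴ * V) + Vᴴ * (1 - Cᴴ * C) * V := by
    rw [conjTranspose_mul]
    simp only [Matrix.mul_sub, Matrix.sub_mul, Matrix.mul_one, Matrix.one_mul, Matrix.mul_assoc]
    abel
  rw [heq]
  exact hV.add (hC.conjTranspose_mul_mul_same V)

end Contr
section TraceLemma
variable {n : Type*} [Fintype n] [DecidableEq n]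

lemma re_trace_mul_le {K P : Matrix n n ℂ} (hK : (1 - Kᴴ * K).PosSemidef)
    (hP : P.PosSemidef) : (K * P).trace.re ≤ P.trace.re := by
  set S := hP.sqrt with hSdef
  have hS := hP.posSemidef_sqrt
  have hSH : Sᴴ = S := hS.isHermitian
  have hSS : S * S = P := hP.sqrt_mul_self
  have htr : (K * P).trace = (S * (K * S)).trace := by
    rw [← hSS, ← Matrix.mul_assoc, Matrix.trace_mul_comm (K * S) S]
  have htrP : P.trace = (S * S).trace := by rw [hSS]
  -- columns of S
  set v : n → n → ℂ := fun i => (fun q => S q i) with hv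
  have hsp : ∀ a c, S a c = star (S c a) := by
    intro a c
    conv_lhs => rw [← hSH]
    rw [Matrix.conjTranspose_apply]
  have hdiag : ∀ i, (S * (K * S)) i i = dotProduct (star (v i)) (K *ᵥ (v i)) := by
    intro i
    simp only [Matrix.mul_apply, dotProduct, Matrix.mulVec, dotProduct, Pi.star_apply, hv]
    refine Finset.sum_congr rfl fun p _ => ?_
    rw [hsp i p]
  have hdiag2 : ∀ i, (S * S) i i = dotProduct (star (v i)) (v i) := by
    intro i
    simp only [Matrix.mul_apply, dotProduct, Pi.star_apply, hv]
    refine Finset.sum_congr rfl fun p _ => ?_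
    rw [hsp i p]
  rw [htr, htrP]
  unfold Matrix.trace Matrix.diag
  rw [Complex.re_sum, Complex.re_sum]
  refine Finset.sum_le_sum fun i _ => ?_
  rw [hdiag i, hdiag2 i]
  -- re ⟪v, K v⟫ ≤ ‖v‖²
  have h1 : (dotProduct (star (v i)) (K *ᵥ v i)).re ≤ ‖Ev (v i)‖ * ‖Ev (K *ᵥ v i)‖ := by
    rw [dot_eq_inner]
    have := (RCLike.re_le_norm (K := ℂ) (inner ℂ (Ev (v i)) (Ev (K *ᵥ v i)))).trans
      (norm_inner_le_norm (𝕜 := ℂ) (Ev (v i)) (Ev (K *ᵥ v i)))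
    simpa [RCLike.re] using this
  have h2 : ‖Ev (K *ᵥ v i)‖ ≤ ‖Ev (v i)‖ := contr_norm_le hK (v i)
  have h3 : (dotProduct (star (v i)) (v i)).re = ‖Ev (v i)‖ ^ 2 := normsq_eq (v i)
  rw [h3]
  nlinarith [norm_nonneg (Ev (v i)), norm_nonneg (Ev (K *ᵥ v i))]

end TraceLemma
section Polar
variable {m n : Type*} [Fintype m] [Fintype n] [DecidableEq n]

lemma polar_decomp (A : Matrix m n ℂ) {G : Matrix n n ℂ} (hG : G.PosSemidef)
    (hGA : Aᴴ * A = G) :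
    ∃ W : Matrix m n ℂ, A = W * hG.sqrt ∧ Wᴴ * W * hG.sqrt = hG.sqrt ∧
      (1 - Wᴴ * W).PosSemidef := by
  subst hGA
  set S := hG.sqrt with hSdef
  have hS : S.PosSemidef := hG.posSemidef_sqrt
  have hSH : S.IsHermitian := hS.isHermitian
  have hSS : S * S = Aᴴ * A := hG.sqrt_mul_self
  set U : Matrix n n ℂ := (hSH.eigenvectorUnitary : Matrix n n ℂ) with hUdef
  set e : n → ℝ := hSH.eigenvalues with he
  set ce : n → ℂ := RCLike.ofReal ∘ e with hce
  set dp : n → ℂ := fun i => if e i = 0 then 0 else (RCLike.ofReal (e i))⁻¹ with hdp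
  set pd : n → ℂ := fun i => if e i = 0 then 0 else 1 with hpd
  have hU2 : U * Uᴴ = 1 := by
    rw [← star_eq_conjTranspose]
    exact Matrix.mem_unitaryGroup_iff.mp hSH.eigenvectorUnitary.2
  have hU1 : Uᴴ * U = 1 := by
    rw [← star_eq_conjTranspose]
    exact Matrix.mem_unitaryGroup_iff'.mp hSH.eigenvectorUnitary.2
  have hspec : S = U * (Matrix.diagonal ce * Uᴴ) := by
    rw [← Matrix.mul_assoc, ← star_eq_conjTranspose]
    exact hSH.spectral_theorem.trans (Unitary.conjStarAlgAut_apply _ _)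
  -- helpers
  have hcan : ∀ X : Matrix n n ℂ, Uᴴ * (U * X) = X := fun X => by
    rw [← Matrix.mul_assoc, hU1, Matrix.one_mul]
  have hdm : ∀ (f g h : n → ℂ), (∀ i, f i * g i = h i) →
      ∀ X : Matrix n n ℂ, Matrix.diagonal f * (Matrix.diagonal g * X) = Matrix.diagonal h * X :=
    fun f g h hfg X => by
      rw [← Matrix.mul_assoc, Matrix.diagonal_mul_diagonal]
      congr 1
      exact congrArg _ (funext hfg)
  have hSU : ∀ X : Matrix n n ℂ, S * (U * X) = U * (Matrix.diagonal ce * X) := fun X => by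
    conv_lhs => rw [hspec]
    rw [Matrix.mul_assoc, Matrix.mul_assoc, hcan]
  have hUS : Uᴴ * S = Matrix.diagonal ce * Uᴴ := by
    conv_lhs => rw [hspec]
    rw [hcan]
  -- pointwise facts
  have f1 : ∀ i, ce i * dp i = pd i := fun i => by
    by_cases h : e i = 0 <;>
      simp [hce, hdp, hpd, h, mul_inv_cancel₀, RCLike.ofReal_eq_zero, h]
  have f2 : ∀ i, dp i * ce i = pd i := fun i => by
    by_cases h : e i = 0 <;>
      simp [hce, hdp, hpd, h, inv_mul_cancel₀, RCLike.ofReal_eq_zero, h]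
  have f3 : ∀ i, pd i * ce i = ce i := fun i => by
    by_cases h : e i = 0 <;> simp [hce, hpd, h]
  have f4 : ∀ i, ce i * (1 - pd i) = 0 := fun i => by
    by_cases h : e i = 0 <;> simp [hce, hpd, h]
  have hdpH : (Matrix.diagonal dp)ᴴ = Matrix.diagonal dp := by
    have hstar : star dp = dp := by
      funext i
      by_cases h : e i = 0 <;>
        simp [hdp, h, Pi.star_apply, star_inv₀, RCLike.conj_ofReal]
    rw [Matrix.diagonal_conjTranspose, hstar]
  have f5 : ∀ i, ce i * pd i = ce i := fun i => by
    by_cases h : e i = 0 <;> simp [hce, hpd, h]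
  have hone : (1 : Matrix n n ℂ) - Matrix.diagonal pd
      = Matrix.diagonal (fun i => (1 : ℂ) - pd i) := by
    rw [← Matrix.diagonal_one, Matrix.diagonal_sub]
  -- the kernel cancellation
  set N : Matrix n n ℂ := U * ((1 - Matrix.diagonal pd) * Uᴴ) with hNdef
  have hSN : S * N = 0 := by
    rw [hNdef, hone, hSU, hdm ce (fun i => (1:ℂ) - pd i) (fun _ => 0) f4]
    simp
  have hAN : A * N = 0 := by
    rw [← Matrix.conjTranspose_mul_self_eq_zero]
    have : (A * N)ᴴ * (A * N) = Nᴴ * (Aᴴ * (A * N)) := by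
      simp only [Matrix.conjTranspose_mul, Matrix.mul_assoc]
    rw [this, ← Matrix.mul_assoc Aᴴ A N, ← hSS, Matrix.mul_assoc S S N, hSN]
    simp
  have hsplit : U * (Matrix.diagonal pd * Uᴴ) = 1 - N := by
    rw [hNdef, Matrix.sub_mul, Matrix.one_mul, Matrix.mul_sub, hU2, sub_sub_cancel]
  have hKey : A * (U * (Matrix.diagonal pd * Uᴴ)) = A := by
    rw [hsplit, Matrix.mul_sub, Matrix.mul_one, hAN, sub_zero]
  have hWW : (A * (U * (Matrix.diagonal dp * Uᴴ)))ᴴ * (A * (U * (Matrix.diagonal dp * Uᴴ)))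
      = U * (Matrix.diagonal pd * Uᴴ) := by
    have hct : (A * (U * (Matrix.diagonal dp * Uᴴ)))ᴴ
        = U * (Matrix.diagonal dp * (Uᴴ * Aᴴ)) := by
      simp only [Matrix.conjTranspose_mul, Matrix.conjTranspose_conjTranspose, hdpH,
        Matrix.mul_assoc]
    rw [hct]
    calc U * (Matrix.diagonal dp * (Uᴴ * Aᴴ)) * (A * (U * (Matrix.diagonal dp * Uᴴ)))
        = U * (Matrix.diagonal dp * (Uᴴ * (Aᴴ * (A * (U * (Matrix.diagonal dp * Uᴴ)))))) := by
          simp only [Matrix.mul_assoc]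
      _ = U * (Matrix.diagonal dp * (Uᴴ * (S * (S * (U * (Matrix.diagonal dp * Uᴴ)))))) := by
          rw [← Matrix.mul_assoc Aᴴ A _, ← hSS, Matrix.mul_assoc]
      _ = U * (Matrix.diagonal dp * (Uᴴ * (S * (U * (Matrix.diagonal pd * Uᴴ))))) := by
          rw [hSU (Matrix.diagonal dp * Uᴴ), hdm ce dp pd f1]
      _ = U * (Matrix.diagonal dp * (Uᴴ * (U * (Matrix.diagonal ce * (Matrix.diagonal pd * Uᴴ))))) := by
          rw [hSU (Matrix.diagonal pd * Uᴴ)]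
      _ = U * (Matrix.diagonal dp * (Matrix.diagonal ce * (Matrix.diagonal pd * Uᴴ))) := by
          rw [hcan]
      _ = U * (Matrix.diagonal pd * (Matrix.diagonal pd * Uᴴ)) := by
          rw [hdm dp ce pd f2]
      _ = U * (Matrix.diagonal pd * Uᴴ) := by
          rw [hdm pd pd pd (fun i => by by_cases h : e i = 0 <;> simp [hpd, h])]
  refine ⟨A * (U * (Matrix.diagonal dp * Uᴴ)), ?_, ?_, ?_⟩
  · -- A = W * S
    calc A = A * (U * (Matrix.diagonal pd * Uᴴ)) := hKey.symm
      _ = A * (U * (Matrix.diagonal dp * (Matrix.diagonal ce * Uᴴ))) := by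
          rw [hdm dp ce pd f2]
      _ = A * (U * (Matrix.diagonal dp * (Uᴴ * S))) := by rw [hUS]
      _ = A * (U * (Matrix.diagonal dp * Uᴴ)) * S := by simp only [Matrix.mul_assoc]
  · -- WᴴW S = S
    rw [hWW, Matrix.mul_assoc, Matrix.mul_assoc, hUS, hdm pd ce ce f3, ← hspec]
  · -- contraction
    rw [hWW]
    have heq : (1 : Matrix n n ℂ) - U * (Matrix.diagonal pd * Uᴴ)
        = U * Matrix.diagonal (fun i => (1:ℂ) - pd i) * Uᴴ := by
      rw [Matrix.mul_assoc, ← hone, Matrix.sub_mul, Matrix.one_mul, Matrix.mul_sub, hU2]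
    rw [heq]
    refine Matrix.PosSemidef.mul_mul_conjTranspose_same ?_ U
    refine Matrix.PosSemidef.diagonal fun i => ?_
    by_cases h : e i = 0 <;> simp [hpd, h]

end Polar
section Blocks
variable {n m : Type*} [Fintype n] [Fintype m] [DecidableEq n] [DecidableEq m]

lemma psd_fromBlocks_zero {Q : Matrix n n ℂ} (hQ : Q.PosSemidef) :
    (Matrix.fromBlocks (0 : Matrix m m ℂ) 0 0 Q).PosSemidef := by
  refine Matrix.PosSemidef.of_dotProduct_mulVec_nonneg ?_ ?_
  · unfold Matrix.IsHermitian
    rw [Matrix.fromBlocks_conjTranspose]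
    simp [hQ.isHermitian.eq]
  · intro x
    have hvec : (Matrix.fromBlocks (0 : Matrix m m ℂ) 0 0 Q) *ᵥ x
        = Sum.elim (0 : m → ℂ) (Q *ᵥ (x ∘ Sum.inr)) := by
      rw [Matrix.fromBlocks_mulVec]
      simp
    rw [hvec]
    have hdot : dotProduct (star x) (Sum.elim (0 : m → ℂ) (Q *ᵥ (x ∘ Sum.inr)))
        = dotProduct (star (x ∘ Sum.inr)) (Q *ᵥ (x ∘ Sum.inr)) := by
      simp [dotProduct, Fintype.sum_sum_type]
    rw [hdot]
    exact hQ.dotProduct_mulVec_nonneg _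

lemma psd_sum {ι : Type*} (s : Finset ι) (f : ι → Matrix n n ℂ)
    (h : ∀ i ∈ s, (f i).PosSemidef) : (∑ i ∈ s, f i).PosSemidef :=
  Finset.sum_induction f Matrix.PosSemidef (fun _ _ ha hb => ha.add hb)
    Matrix.PosSemidef.zero h

end Blocks

/-- Fidelity monotonicity under partial trace: for density
matrices ρ, σ on H_A ⊗ H_B, F(ρ,σ) ≤ F(tr_B ρ, tr_B σ), where
F(ρ,σ) = tr √(√ρ σ √ρ). -/
theorem fidelity_mono_ptrace {a b : ℕ}
    (ρ σ : Matrix (Fin a × Fin b) (Fin a × Fin b) ℂ)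
    (hρ : ρ.PosSemidef) (hσ : σ.PosSemidef)
    (hρtr : ρ.trace = 1) (hσtr : σ.trace = 1)
    (hρA : (ptraceB ρ).PosSemidef)
    (h1 : (hρ.sqrt * σ * hρ.sqrt).PosSemidef)
    (h2 : (hρA.sqrt * ptraceB σ * hρA.sqrt).PosSemidef) :
    (h1.sqrt.trace).re ≤ (h2.sqrt.trace).re := by
  classical
  have hsρ := hρ.posSemidef_sqrt
  have hsσ := hσ.posSemidef_sqrt
  set A := hσ.sqrt * hρ.sqrt with hAdef
  have hAA : Aᴴ * A = hρ.sqrt * σ * hρ.sqrt := by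
    rw [hAdef, Matrix.conjTranspose_mul, hsσ.isHermitian.eq, hsρ.isHermitian.eq,
      Matrix.mul_assoc, ← Matrix.mul_assoc hσ.sqrt hσ.sqrt hρ.sqrt, hσ.sqrt_mul_self,
      ← Matrix.mul_assoc]
  obtain ⟨W, hW1, hW2, hW3⟩ := polar_decomp A h1 hAA
  set X := hρ.sqrt * (Wᴴ * hσ.sqrt) with hXdef
  have htrX : X.trace = h1.sqrt.trace := by
    rw [hXdef, Matrix.trace_mul_comm, Matrix.mul_assoc]
    have : hσ.sqrt * hρ.sqrt = A := rfl
    rw [this, hW1, ← Matrix.mul_assoc, hW2]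
  -- Step 2 : block matrix is PSD
  set M := Matrix.fromBlocks ρ X Xᴴ σ with hMdef
  have hMpsd : M.PosSemidef := by
    set R := Matrix.fromCols hρ.sqrt (Wᴴ * hσ.sqrt) with hRdef
    have hct2 : (Wᴴ * hσ.sqrt)ᴴ = hσ.sqrt * W := by
      rw [Matrix.conjTranspose_mul, Matrix.conjTranspose_conjTranspose, hsσ.isHermitian.eq]
    have hXH : Xᴴ = hσ.sqrt * (W * hρ.sqrt) := by
      rw [hXdef]
      simp only [Matrix.conjTranspose_mul, Matrix.conjTranspose_conjTranspose,
        hsρ.isHermitian.eq, hsσ.isHermitian.eq, Matrix.mul_assoc]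
    have hRR : Rᴴ * R = Matrix.fromBlocks ρ (hρ.sqrt * (Wᴴ * hσ.sqrt))
        (hσ.sqrt * (W * hρ.sqrt)) (hσ.sqrt * (W * (Wᴴ * hσ.sqrt))) := by
      rw [hRdef, Matrix.conjTranspose_fromCols_eq_fromRows_conjTranspose,
        Matrix.fromRows_mul_fromCols, hsρ.isHermitian.eq, hct2, hρ.sqrt_mul_self]
      simp only [Matrix.mul_assoc]
    have hQpsd : (σ - hσ.sqrt * (W * (Wᴴ * hσ.sqrt))).PosSemidef := by
      have hconj := ((contr_conjTranspose hW3).conjTranspose_mul_mul_same hσ.sqrt)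
      have heq : hσ.sqrtᴴ * (1 - W * Wᴴ) * hσ.sqrt
          = σ - hσ.sqrt * (W * (Wᴴ * hσ.sqrt)) := by
        rw [hsσ.isHermitian.eq, Matrix.mul_sub, Matrix.mul_one, Matrix.sub_mul,
          hσ.sqrt_mul_self]
        simp only [Matrix.mul_assoc]
      rwa [heq] at hconj
    have hsplit : M = Rᴴ * R
        + Matrix.fromBlocks 0 0 0 (σ - hσ.sqrt * (W * (Wᴴ * hσ.sqrt))) := by
      rw [hRR, hMdef, Matrix.fromBlocks_add]
      rw [add_zero, add_zero, add_zero, add_sub_cancel, ← hXdef, ← hXH]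
    rw [hsplit]
    exact (Matrix.posSemidef_conjTranspose_mul_self R).add (psd_fromBlocks_zero hQpsd)
  -- Step 3 : partial trace of the block matrix
  set emb : Fin b → (Fin a ⊕ Fin a) → ((Fin a × Fin b) ⊕ (Fin a × Fin b)) :=
    fun j => Sum.map (fun i => (i, j)) (fun i => (i, j)) with hemb
  set MA := Matrix.fromBlocks (ptraceB ρ) (ptraceB X) (ptraceB X)ᴴ (ptraceB σ) with hMAdef
  have hsum : MA = ∑ j : Fin b, M.submatrix (emb j) (emb j) := by
    apply Matrix.ext
    intro s t
    cases s <;> cases t <;>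
      simp [hMAdef, hMdef, Matrix.sum_apply, ptraceB, hemb,
        Matrix.conjTranspose_apply, star_sum]
  have hMApsd : MA.PosSemidef := by
    rw [hsum]
    exact psd_sum _ _ fun j _ => hMpsd.submatrix (emb j)
  -- Step 4 : Gram decomposition of MA
  set T := hMApsd.sqrt with hTdef
  have hTH : Tᴴ = T := hMApsd.posSemidef_sqrt.isHermitian.eq
  have hTT : T * T = MA := hMApsd.sqrt_mul_self
  set T1 := T.submatrix id Sum.inl with hT1def
  set T2 := T.submatrix id Sum.inr with hT2def
  have hblock : ∀ (f g : Fin a → (Fin a ⊕ Fin a)),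
      (T.submatrix id f)ᴴ * (T.submatrix id g) = MA.submatrix f g := by
    intro f g
    rw [Matrix.conjTranspose_submatrix, hTH,
      ← Matrix.submatrix_mul T T f id g Function.bijective_id, hTT]
  have hT1T1 : T1ᴴ * T1 = ptraceB ρ := by
    rw [hT1def, hblock]
    apply Matrix.ext; intro i k; simp [hMAdef]
  have hT2T2 : T2ᴴ * T2 = ptraceB σ := by
    rw [hT2def, hblock]
    apply Matrix.ext; intro i k; simp [hMAdef]
  have hT1T2 : T1ᴴ * T2 = ptraceB X := by
    rw [hT1def, hT2def, hblock]
    apply Matrix.ext; intro i k; simp [hMAdef]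
  have hσA : (ptraceB σ).PosSemidef := hT2T2 ▸ Matrix.posSemidef_conjTranspose_mul_self T2
  obtain ⟨W1, hW11, _, hW13⟩ := polar_decomp T1 hρA hT1T1
  obtain ⟨W2, hW21, _, hW23⟩ := polar_decomp T2 hσA hT2T2
  -- Step 5 : polar of B on the reduced space
  set B := hσA.sqrt * hρA.sqrt with hBdef
  have hBB : Bᴴ * B = hρA.sqrt * ptraceB σ * hρA.sqrt := by
    rw [hBdef, Matrix.conjTranspose_mul, hσA.posSemidef_sqrt.isHermitian.eq,
      hρA.posSemidef_sqrt.isHermitian.eq, Matrix.mul_assoc,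
      ← Matrix.mul_assoc hσA.sqrt hσA.sqrt hρA.sqrt, hσA.sqrt_mul_self, ← Matrix.mul_assoc]
  obtain ⟨V, hV1, hV2, hV3⟩ := polar_decomp B h2 hBB
  -- Step 6 : trace chain
  have hXA : ptraceB X = hρA.sqrt * ((W1ᴴ * W2) * hσA.sqrt) := by
    rw [← hT1T2, hW11, hW21]
    simp only [Matrix.conjTranspose_mul, hρA.posSemidef_sqrt.isHermitian.eq,
      Matrix.mul_assoc]
  have htr2 : (ptraceB X).trace = ((W1ᴴ * W2 * V) * h2.sqrt).trace := by
    rw [hXA, Matrix.trace_mul_comm, Matrix.mul_assoc]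
    have : hσA.sqrt * hρA.sqrt = B := rfl
    rw [this, hV1]
    simp only [Matrix.mul_assoc]
  have hKc : (1 - (W1ᴴ * W2 * V)ᴴ * (W1ᴴ * W2 * V)).PosSemidef := by
    have h1c : (1 - (W1ᴴ)ᴴ * W1ᴴ).PosSemidef := by
      rw [Matrix.conjTranspose_conjTranspose]
      exact contr_conjTranspose hW13
    exact contr_mul (contr_mul h1c hW23) hV3
  have hmain := re_trace_mul_le hKc h2.posSemidef_sqrt
  have htrPT : (ptraceB X).trace = X.trace := by
    simp [Matrix.trace, ptraceB, Matrix.diag, Fintype.sum_prod_type]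
  calc h1.sqrt.trace.re = X.trace.re := by rw [htrX]
    _ = (ptraceB X).trace.re := by rw [htrPT]
    _ = ((W1ᴴ * W2 * V) * h2.sqrt).trace.re := by rw [htr2]
    _ ≤ h2.sqrt.trace.re := hmain
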